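/- Let r : F̄X ⊗ FY ⟶ Ω be tame with witnesses (r_*, r^*). Then: (1) r is a dagger mono, i.e. r† ∘ (r̄_* ⊗ id_{FX}) = cpX (that is, r† • r = cpX, the identity on X), if and only if r^* ∘ r_* = id_{FX}; (2) r is a dagger epi, i.e. r ∘ ((r^*)‾ ⊗ id_{FY}) = cpY (that is, r • r† = cpY), if and only if r_* ∘ r^* = id_{FY}. Consequently r is a dagger isomorphism (both hold) if and only if r_* is an isomorphism with inverse r^*. -/

import Mathlib

open CategoryTheory MonoidalCategory

universe u v

/-- Characterisation of dagger monos, dagger epis and dagger isomorphisms among tame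
relations: `r† • r = id_X` iff `r^* ∘ r_* = id`, `r • r† = id_Y` iff `r_* ∘ r^* = id`,
and `r` is a dagger iso iff `r_*` is an isomorphism with inverse `r^*`. -/
theorem tame_dagger_mono_epi_iso {C : Type u} [Category.{v} C] [MonoidalCategory C]
    (B : C ⥤ C) [B.Faithful] (Ω FX FY : C)
    (cpX : B.obj FX ⊗ FX ⟶ Ω) (cpY : B.obj FY ⊗ FY ⟶ Ω)
    (monoX1 : ∀ {W : C} (u v : W ⟶ B.obj FX),
      (u ⊗ₘ 𝟙 FX) ≫ cpX = (v ⊗ₘ 𝟙 FX) ≫ cpX → u = v)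
    (monoX2 : ∀ {W : C} (u v : W ⟶ FX),
      (𝟙 (B.obj FX) ⊗ₘ u) ≫ cpX = (𝟙 (B.obj FX) ⊗ₘ v) ≫ cpX → u = v)
    (monoY1 : ∀ {W : C} (u v : W ⟶ B.obj FY),
      (u ⊗ₘ 𝟙 FY) ≫ cpY = (v ⊗ₘ 𝟙 FY) ≫ cpY → u = v)
    (monoY2 : ∀ {W : C} (u v : W ⟶ FY),
      (𝟙 (B.obj FY) ⊗ₘ u) ≫ cpY = (𝟙 (B.obj FY) ⊗ₘ v) ≫ cpY → u = v)
    (r : B.obj FX ⊗ FY ⟶ Ω) (rst : FX ⟶ FY) (rco : FY ⟶ FX)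
    (hr1 : (B.map rst ⊗ₘ 𝟙 FY) ≫ cpY = r)
    (hr2 : (𝟙 (B.obj FX) ⊗ₘ rco) ≫ cpX = r) :
    -- (1) dagger mono: r† • r = id_X  iff  r^* ∘ r_* = id
    ((B.map rst ⊗ₘ 𝟙 FX) ≫ ((B.map rco ⊗ₘ 𝟙 FX) ≫ cpX) = cpX ↔ rst ≫ rco = 𝟙 FX) ∧
    -- (2) dagger epi: r • r† = id_Y  iff  r_* ∘ r^* = id
    ((B.map rco ⊗ₘ 𝟙 FY) ≫ r = cpY ↔ rco ≫ rst = 𝟙 FY) ∧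
    -- consequently: dagger iso iff r_* is an isomorphism with inverse r^*
    (((B.map rst ⊗ₘ 𝟙 FX) ≫ ((B.map rco ⊗ₘ 𝟙 FX) ≫ cpX) = cpX ∧
        (B.map rco ⊗ₘ 𝟙 FY) ≫ r = cpY) ↔
      (rst ≫ rco = 𝟙 FX ∧ rco ≫ rst = 𝟙 FY)) := by

  have key1 : ((B.map rst ⊗ₘ 𝟙 FX) ≫ ((B.map rco ⊗ₘ 𝟙 FX) ≫ cpX) = cpX ↔ rst ≫ rco = 𝟙 FX) := by
    constructor
    · intro h
      apply B.map_injective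
      apply monoX1
      rw [B.map_comp, B.map_id]
      calc (B.map rst ≫ B.map rco ⊗ₘ 𝟙 FX) ≫ cpX
          = (B.map rst ⊗ₘ 𝟙 FX) ≫ ((B.map rco ⊗ₘ 𝟙 FX) ≫ cpX) := by
            rw [← Category.assoc, tensorHom_comp_tensorHom, Category.comp_id]
        _ = cpX := h
        _ = (𝟙 (B.obj FX) ⊗ₘ 𝟙 FX) ≫ cpX := by rw [id_tensorHom_id, Category.id_comp]
    · intro h
      rw [← Category.assoc, tensorHom_comp_tensorHom, Category.comp_id, ← B.map_comp, h, B.map_id,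
        id_tensorHom_id, Category.id_comp]
  have key2 : ((B.map rco ⊗ₘ 𝟙 FY) ≫ r = cpY ↔ rco ≫ rst = 𝟙 FY) := by
    rw [← hr1]
    constructor
    · intro h
      apply B.map_injective
      apply monoY1
      rw [B.map_comp, B.map_id]
      calc (B.map rco ≫ B.map rst ⊗ₘ 𝟙 FY) ≫ cpY
          = (B.map rco ⊗ₘ 𝟙 FY) ≫ ((B.map rst ⊗ₘ 𝟙 FY) ≫ cpY) := by
            rw [← Category.assoc, tensorHom_comp_tensorHom, Category.comp_id]
        _ = cpY := h
        _ = (𝟙 (B.obj FY) ⊗ₘ 𝟙 FY) ≫ cpY := by rw [id_tensorHom_id, Category.id_comp]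
    · intro h
      rw [← Category.assoc, tensorHom_comp_tensorHom, Category.comp_id, ← B.map_comp, h, B.map_id,
        id_tensorHom_id, Category.id_comp]
  exact ⟨key1, key2, and_congr key1 key2⟩
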